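/- Let H be a complex Hilbert space and let A be a bounded self-adjoint positive operator on H. Then for every ξ ∈ H and every t ≥ 0, ‖ξ − e^{−tA}ξ‖² ≤ t · ‖A^{1/2}ξ‖², where e^{−tA} and A^{1/2} are defined via the continuous functional calculus for A. -/

import Mathlib

open Matrix
open scoped BigOperators Classical ComplexOrder

namespace QPaper

variable {ι : Type*} [Fintype ι] [DecidableEq ι]

/-- The positive semidefinite square root of a matrix (junk value `0` if the matrix is
not positive semidefinite). -/
noncomputable def psdSqrt (X : Matrix ι ι ℂ) : Matrix ι ι ℂ :=
  if h : X.PosSemidef then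
    h.1.eigenvectorUnitary.1 * diagonal ((↑) ∘ (Real.sqrt ∘ h.1.eigenvalues)) *
      (star h.1.eigenvectorUnitary : Matrix ι ι ℂ)
  else 0

/-- The normalized trace (Schatten 1) norm `‖X‖₁ = tr |X| / card ι`. -/
noncomputable def normOne (X : Matrix ι ι ℂ) : ℝ :=
  (psdSqrt (Xᴴ * X)).trace.re / Fintype.card ι

/-- The normalized Schatten 2 norm `‖X‖₂ = (tr (X* X) / card ι)^{1/2}`. -/
noncomputable def normTwo (X : Matrix ι ι ℂ) : ℝ :=
  Real.sqrt ((Xᴴ * X).trace.re / Fintype.card ι)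

/-- The operator norm of a matrix, acting on the Euclidean space. -/
noncomputable def opNorm (X : Matrix ι ι ℂ) : ℝ :=
  ‖Matrix.toEuclideanCLM (𝕜 := ℂ) X‖

/-- The Loewner order: `X ≤ Y` iff `Y - X` is positive semidefinite. -/
def LoewnerLE (X Y : Matrix ι ι ℂ) : Prop := (Y - X).PosSemidef

/-- Configurations of `n` qubits. -/
abbrev QState (n : ℕ) := Fin n → Fin 2

/-- The algebra of `n`-qubit observables `M₂(ℂ)^{⊗ n}`. -/
abbrev Obs (n : ℕ) := Matrix (QState n) (QState n) ℂ

/-- The conditional expectation `E_S = ⊗_{j ∈ S} (½ tr)(·) 𝟏 ⊗ id` replacing each qubit in `S`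
by its normalized partial trace:  `E_S(A) = 2^{-|S|} tr_S(A) ⊗ 𝟏_S`. -/
noncomputable def ESet {n : ℕ} (S : Finset (Fin n)) (A : Obs n) : Obs n :=
  Matrix.of fun x y =>
    if ∀ j ∈ S, x j = y j then
      ((2 : ℂ) ^ n)⁻¹ *
        ∑ z : QState n,
          A (fun j => if j ∈ S then z j else x j) (fun j => if j ∈ S then z j else y j)
    else 0

/-- The derivation `d_j = 𝕀^{⊗(j-1)} ⊗ (𝕀 - ½ tr(·) 𝟏) ⊗ 𝕀^{⊗(n-j)}`. -/
noncomputable def dCoord {n : ℕ} (j : Fin n) (A : Obs n) : Obs n := A - ESet {j} A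

/-- The quantum depolarizing semigroup `P_t = (e^{-t} 𝕀 + (1 - e^{-t}) ½ tr(·) 𝟏)^{⊗ n}`. -/
noncomputable def Pt {n : ℕ} (t : ℝ) (A : Obs n) : Obs n :=
  ∑ S : Finset (Fin n),
    (Real.exp (-t) ^ (n - S.card) * (1 - Real.exp (-t)) ^ S.card) • ESet S A

/-- The generator `𝓛 = ∑_j d_j`. -/
noncomputable def Lgen {n : ℕ} (A : Obs n) : Obs n := ∑ j : Fin n, dCoord j A

/-- The carré du champ `Γ(A) = ½ (𝓛(A*) A + A* 𝓛(A) - 𝓛(A* A))`. -/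
noncomputable def carre {n : ℕ} (A : Obs n) : Obs n :=
  (2 : ℂ)⁻¹ • (Lgen Aᴴ * A + Aᴴ * Lgen A - Lgen (Aᴴ * A))

/-- The total `L¹`-influence `Inf¹(A) = ∑_j ‖d_j A‖₁`. -/
noncomputable def inf1 {n : ℕ} (A : Obs n) : ℝ := ∑ j : Fin n, normOne (dCoord j A)

/-- The total `L²`-influence `Inf²(A) = ∑_j ‖d_j A‖₂²`. -/
noncomputable def inf2 {n : ℕ} (A : Obs n) : ℝ := ∑ j : Fin n, normTwo (dCoord j A) ^ 2

/-- The mean part `2^{-n} tr(A) 𝟏`. -/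
noncomputable def meanPart {n : ℕ} (A : Obs n) : Obs n :=
  (A.trace / (2 : ℂ) ^ n) • (1 : Obs n)

/-- The variance `Var(A) = ‖A - 2^{-n} tr(A) 𝟏‖₂²`. -/
noncomputable def Var {n : ℕ} (A : Obs n) : ℝ := normTwo (A - meanPart A) ^ 2


/-- If `A` is a bounded positive self-adjoint operator on a complex Hilbert space `H`, then
for every `ξ ∈ H` and `t ≥ 0`, `‖ξ − e^{−tA} ξ‖² ≤ t ‖A^{1/2} ξ‖²`, where `e^{−tA}` and
`A^{1/2}` are defined via the continuous functional calculus. -/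
theorem exp_sqrt_bound {H : Type*} [NormedAddCommGroup H] [InnerProductSpace ℂ H]
    [CompleteSpace H] (A : H →L[ℂ] H) (hA : A.IsPositive) (ξ : H) (t : ℝ) (ht : 0 ≤ t) :
    ‖ξ - cfc (fun x : ℝ => Real.exp (-t * x)) A ξ‖ ^ 2 ≤
      t * ‖cfc (fun x : ℝ => Real.sqrt x) A ξ‖ ^ 2 := by
  have hsa : IsSelfAdjoint A := hA.isSelfAdjoint
  have hAnn : (0 : H →L[ℂ] H) ≤ A := (ContinuousLinearMap.nonneg_iff_isPositive A).mpr hA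
  have hspec : ∀ x ∈ spectrum ℝ A, 0 ≤ x := fun x hx => spectrum_nonneg_of_nonneg hAnn hx
  set g : ℝ → ℝ := fun x => 1 - Real.exp (-t * x) with hg
  set B : H →L[ℂ] H := cfc g A with hB
  set S : H →L[ℂ] H := cfc (fun x : ℝ => Real.sqrt x) A with hS
  have hBsa : IsSelfAdjoint B := cfc_predicate g A
  have hSsa : IsSelfAdjoint S := cfc_predicate _ A
  have h1 : ξ - cfc (fun x : ℝ => Real.exp (-t * x)) A ξ = B ξ := by
    have : B = 1 - cfc (fun x : ℝ => Real.exp (-t * x)) A := by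
      rw [hB, hg, cfc_sub (fun _ : ℝ => (1:ℝ)) (fun x : ℝ => Real.exp (-t * x)) A,
        cfc_const_one ℝ A]
    simp [this]
  rw [h1]
  -- key operator inequality
  set D : H →L[ℂ] H := cfc (fun x : ℝ => t * x - g x * g x) A with hD
  have hDpos : D.IsPositive := by
    rw [← ContinuousLinearMap.nonneg_iff_isPositive]
    refine cfc_nonneg fun x hx => ?_
    have hx0 : 0 ≤ x := hspec x hx
    have h1 : Real.exp (-t * x) ≤ 1 := by
      rw [Real.exp_le_one_iff]; nlinarith
    have h2 : 0 ≤ Real.exp (-t * x) := (Real.exp_pos _).le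
    have h3 : -t * x + 1 ≤ Real.exp (-t * x) := Real.add_one_le_exp _
    simp only [hg]
    nlinarith
  have hSS : S * S = A := by
    rw [hS, ← cfc_mul (fun x : ℝ => Real.sqrt x) (fun x : ℝ => Real.sqrt x) A
      Real.continuous_sqrt.continuousOn Real.continuous_sqrt.continuousOn]
    have : cfc (fun x : ℝ => Real.sqrt x * Real.sqrt x) A = cfc (fun x : ℝ => x) A :=
      cfc_congr fun x hx => Real.mul_self_sqrt (hspec x hx)
    rw [this, cfc_id' ℝ A]
  have hDeq : D = t • A - B * B := by
    rw [hD, cfc_sub (fun x : ℝ => t * x) (fun x => g x * g x) A, cfc_mul g g A, ← hB]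
    congr 1
    exact cfc_const_mul_id t A
  -- inner product computations
  have hBi : (inner ℂ (B (B ξ)) ξ : ℂ) = inner ℂ (B ξ) (B ξ) := by
    nth_rw 1 [← hBsa.adjoint_eq]
    exact ContinuousLinearMap.adjoint_inner_left B ξ (B ξ)
  have hAi : (inner ℂ (A ξ) ξ : ℂ) = inner ℂ (S ξ) (S ξ) := by
    rw [← hSS]
    have : (S * S) ξ = S (S ξ) := rfl
    rw [this]
    nth_rw 1 [← hSsa.adjoint_eq]
    exact ContinuousLinearMap.adjoint_inner_left S ξ (S ξ)
  have key := hDpos.inner_nonneg_left ξ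
  rw [hDeq] at key
  simp only [ContinuousLinearMap.sub_apply, ContinuousLinearMap.smul_apply,
    ContinuousLinearMap.mul_apply, inner_sub_left, inner_smul_left, map_sub, _root_.map_mul] at key
  rw [show t • A ξ = ((t : ℂ)) • A ξ from RCLike.real_smul_eq_coe_smul t (A ξ),
    inner_smul_left, hAi, hBi] at key
  simp only [Complex.conj_ofReal, RCLike.re_to_complex, Complex.re_ofReal_mul] at key
  have e1 : (inner ℂ (B ξ) (B ξ) : ℂ).re = ‖B ξ‖ ^ 2 := by
    rw [← RCLike.re_to_complex]; exact inner_self_eq_norm_sq (B ξ)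
  have e2 : (inner ℂ (S ξ) (S ξ) : ℂ).re = ‖S ξ‖ ^ 2 := by
    rw [← RCLike.re_to_complex]; exact inner_self_eq_norm_sq (S ξ)
  have key' := (Complex.nonneg_iff.mp key).1
  simp only [Complex.sub_re, Complex.re_ofReal_mul] at key'
  rw [e1, e2] at key'
  linarith


end QPaper
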